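/- Let G be a triangle-free graph with m edges and largest adjacency eigenvalue λ₁. Then λ₁ ≤ √m. -/

import Mathlib

open Finset Matrix

lemma deg_sum_le_card_edges {V : Type*} [Fintype V] [DecidableEq V]
    (G : SimpleGraph V) [DecidableRel G.Adj] (htf : G.CliqueFree 3) (u : V) :
    ∑ w ∈ G.neighborFinset u, G.degree w ≤ G.edgeFinset.card := by
  classical
  have h1 : ∑ w ∈ G.neighborFinset u, G.degree w
      = ((G.neighborFinset u).sigma (fun w => G.neighborFinset w)).card := by
    rw [Finset.card_sigma]
    rfl
  rw [h1]
  apply Finset.card_le_card_of_injOn (fun p => s(p.1, p.2))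
  · intro p hp
    rw [Finset.mem_coe, Finset.mem_sigma] at hp
    rw [Finset.mem_coe, SimpleGraph.mem_edgeFinset, SimpleGraph.mem_edgeSet]
    exact (SimpleGraph.mem_neighborFinset _ _ _).1 hp.2
  · intro p hp q hq hpq
    rw [Finset.mem_coe] at hp hq
    rw [Finset.mem_sigma, SimpleGraph.mem_neighborFinset, SimpleGraph.mem_neighborFinset] at hp hq
    simp only [Sym2.eq_iff] at hpq
    rcases hpq with ⟨h1, h2⟩ | ⟨h1, h2⟩
    · exact Sigma.ext h1 (heq_of_eq h2)
    · exfalso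
      refine htf {u, q.1, q.2} ?_
      rw [SimpleGraph.is3Clique_triple_iff]
      exact ⟨hq.1, h1 ▸ hp.1, hq.2⟩

lemma eig_sq_le {V : Type*} [Fintype V] [DecidableEq V]
    (G : SimpleGraph V) [DecidableRel G.Adj] (htf : G.CliqueFree 3)
    (μ : ℝ) (v : V → ℝ) (hv : v ≠ 0)
    (hev : G.adjMatrix ℝ *ᵥ v = μ • v) :
    μ ^ 2 ≤ (G.edgeFinset.card : ℝ) := by
  classical
  obtain ⟨w0, hw0⟩ : ∃ w, v w ≠ 0 := by
    by_contra h; push_neg at h; exact hv (funext h)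
  have hne : Nonempty V := ⟨w0⟩
  obtain ⟨u, -, hu⟩ := Finset.exists_max_image Finset.univ (fun w => |v w|) ⟨w0, Finset.mem_univ _⟩
  have hu' : ∀ w, |v w| ≤ |v u| := fun w => hu w (Finset.mem_univ w)
  have hupos : 0 < |v u| := lt_of_lt_of_le (abs_pos.2 hw0) (hu' w0)
  have h1 : ∀ x, μ * v x = ∑ w ∈ G.neighborFinset x, v w := by
    intro x
    have := congrFun hev x
    simpa [Pi.smul_apply] using this.symm
  have h2 : μ ^ 2 * v u = ∑ w ∈ G.neighborFinset u, ∑ z ∈ G.neighborFinset w, v z := by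
    have : μ ^ 2 * v u = μ * (μ * v u) := by ring
    rw [this, h1 u, Finset.mul_sum]
    exact Finset.sum_congr rfl fun w _ => h1 w
  have h3 : μ ^ 2 * |v u| ≤ (G.edgeFinset.card : ℝ) * |v u| := by
    calc μ ^ 2 * |v u| = |μ ^ 2 * v u| := by
          rw [abs_mul, abs_of_nonneg (sq_nonneg μ)]
      _ ≤ ∑ w ∈ G.neighborFinset u, ∑ z ∈ G.neighborFinset w, |v z| := by
          rw [h2]
          refine (Finset.abs_sum_le_sum_abs _ _).trans ?_
          exact Finset.sum_le_sum fun w _ => Finset.abs_sum_le_sum_abs _ _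
      _ ≤ ∑ w ∈ G.neighborFinset u, (G.degree w : ℝ) * |v u| := by
          refine Finset.sum_le_sum fun w _ => ?_
          rw [SimpleGraph.degree]
          calc ∑ z ∈ G.neighborFinset w, |v z|
              ≤ ∑ _z ∈ G.neighborFinset w, |v u| := Finset.sum_le_sum fun z _ => hu' z
            _ = ((G.neighborFinset w).card : ℝ) * |v u| := by
                rw [Finset.sum_const, nsmul_eq_mul]
      _ = ((∑ w ∈ G.neighborFinset u, G.degree w : ℕ) : ℝ) * |v u| := by
          rw [← Finset.sum_mul, Nat.cast_sum]
      _ ≤ (G.edgeFinset.card : ℝ) * |v u| := by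
          have := deg_sum_le_card_edges G htf u
          exact mul_le_mul_of_nonneg_right (Nat.cast_le.2 this) (le_of_lt hupos)
  exact le_of_mul_le_mul_right h3 hupos

theorem nosal_inequality {V : Type*} [Fintype V] [DecidableEq V] [Nonempty V]
    (G : SimpleGraph V) [DecidableRel G.Adj]
    (hA : (G.adjMatrix ℝ).IsHermitian)
    (htf : G.CliqueFree 3) :
    (⨆ i, hA.eigenvalues i) ≤ Real.sqrt G.edgeFinset.card := by
  apply ciSup_le
  intro i
  have hev := hA.mulVec_eigenvectorBasis i
  have hvne : (⇑(hA.eigenvectorBasis i) : V → ℝ) ≠ 0 := by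
    have := hA.eigenvectorBasis.orthonormal.ne_zero i
    intro h
    apply this
    ext x
    exact congrFun h x
  have hsq := eig_sq_le G htf (hA.eigenvalues i) _ hvne hev
  calc hA.eigenvalues i ≤ |hA.eigenvalues i| := le_abs_self _
    _ = Real.sqrt ((hA.eigenvalues i) ^ 2) := (Real.sqrt_sq_eq_abs _).symm
    _ ≤ Real.sqrt G.edgeFinset.card := Real.sqrt_le_sqrt hsq
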